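/- For every integer n ≥ 1 and every rational number q, ∏_{i=1}^{n−1} (i+1 + q(n−i)) = (n!/2^n) · Σ_{T ∈ 𝒯_n} ∏_{v vertex of T} (q + (2−q)/h_v), where the sum is over all plane binary trees with n vertices. -/

import Mathlib

/-- The product over all vertices `v` of a plane binary tree of `f h_v`, where
`h_v` is the hook length of `v` (the number of vertices of the subtree rooted
at `v`). -/
def hookProd (f : ℕ → ℚ) : Tree Unit → ℚ
  | BinaryTree.nil => 1
  | BinaryTree.node _ l r => f (l.numNodes + r.numNodes + 1) * hookProd f l * hookProd f r

open Finset Polynomial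

/-- `hkP x d k = ∏_{j=0}^{k-1} (x - d j)`. -/
def hkP (x d : ℚ) (k : ℕ) : ℚ := ∏ j ∈ Finset.range k, (x - d * j)

def hkA (a b d : ℚ) : ℕ → ℚ
  | 0 => 1
  | k + 1 => a * hkP (a + b * (k + 1) - d) d k / (k + 1).factorial

def hkB (a b d : ℚ) (k : ℕ) : ℚ := hkP (a + b * k) d k / k.factorial

lemma hkP_zero (x d : ℚ) : hkP x d 0 = 1 := by simp [hkP]

lemma hkP_succ (x d : ℚ) (k : ℕ) : hkP x d (k + 1) = x * hkP (x - d) d k := by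
  rw [hkP, Finset.prod_range_succ', hkP]
  simp only [Nat.cast_zero, mul_zero, sub_zero, Nat.cast_add, Nat.cast_one]
  rw [mul_comm]
  congr 1
  exact Finset.prod_congr rfl fun j _ => by ring

lemma hkP_succ' (x d : ℚ) (k : ℕ) :
    hkP (x - d) d (k + 1) = hkP (x - d) d k * (x - d * (k + 1)) := by
  rw [hkP, Finset.prod_range_succ, hkP]
  push_cast
  congr 1
  ring

lemma hkP_pascal (x d : ℚ) (k : ℕ) :
    hkP x d (k + 1) = hkP (x - d) d (k + 1) + d * (k + 1) * hkP (x - d) d k := by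
  rw [hkP_succ, hkP_succ']
  ring

lemma hkB_zero (a b d : ℚ) : hkB a b d 0 = 1 := by simp [hkB, hkP]

lemma hkA_zero (a b d : ℚ) : hkA a b d 0 = 1 := rfl

lemma hkA_zero_left (b d : ℚ) (k : ℕ) : hkA 0 b d (k + 1) = 0 := by simp [hkA]

lemma fact_ne (k : ℕ) : ((k.factorial : ℚ)) ≠ 0 := by
  exact_mod_cast k.factorial_ne_zero

/-- `A = B - b·B(shift)`. -/
lemma hkA_eq (a b d : ℚ) (k : ℕ) :
    hkA a b d (k + 1) = hkB a b d (k + 1) - b * hkB (a + b - d) b d k := by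
  rw [hkA, hkB, hkB]
  have e1 : hkP (a + b * ((k : ℚ) + 1)) d (k + 1)
      = (a + b * (k + 1)) * hkP (a + b * (k + 1) - d) d k := hkP_succ _ d k
  have e2 : a + b - d + b * (k : ℚ) = a + b * (k + 1) - d := by push_cast; ring
  push_cast
  rw [e1, e2, Nat.factorial_succ]
  have h1 := fact_ne k
  have h2 : ((k : ℚ) + 1) ≠ 0 := by positivity
  push_cast
  field_simp
  ring

/-- Pascal for `B`. -/
lemma hkB_pascal (a b d : ℚ) (k : ℕ) :
    hkB a b d (k + 1) = hkB (a - d) b d (k + 1) + d * hkB (a + b - d) b d k := by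
  rw [hkB, hkB, hkB]
  have e2 : a - d + b * ((k : ℚ) + 1) = a + b * (k + 1) - d := by ring
  have e3 : a + b - d + b * (k : ℚ) = a + b * (k + 1) - d := by push_cast; ring
  push_cast
  rw [e2, e3, hkP_pascal (a + b * ((k:ℚ)+1)) d k,
    show a + b * ((k:ℚ)+1) - d = a + b*((k:ℚ)+1) - d from rfl, Nat.factorial_succ]
  have h1 := fact_ne k
  have h2 : ((k : ℚ) + 1) ≠ 0 := by positivity
  push_cast
  field_simp

/-- Pascal for `A`. -/
lemma hkA_pascal (a b d : ℚ) (k : ℕ) :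
    hkA a b d (k + 1) = hkA (a - d) b d (k + 1) + d * hkA (a + b - d) b d k := by
  cases k with
  | zero =>
    simp [hkA, hkP_zero]
  | succ k =>
    have h1 := hkA_eq a b d (k + 1)
    have h2 := hkA_eq (a - d) b d (k + 1)
    have h3 := hkA_eq (a + b - d) b d k
    have h4 := hkB_pascal a b d (k + 1)
    have h5 := hkB_pascal (a + b - d) b d k
    rw [show a - d + b - d = a + b - d - d from by ring] at h2
    linear_combination h1 - h2 - d * h3 + h4 - b * h5

def hkS (a b c d : ℚ) (n : ℕ) : ℚ :=
  ∑ k ∈ Finset.range (n + 1), hkA a b d k * hkB c b d (n - k)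

lemma hkS_step (a b c d : ℚ) (n : ℕ) :
    hkS a b c d (n + 1) = hkS (a - d) b c d (n + 1) + d * hkS (a + b - d) b c d n := by
  unfold hkS
  rw [Finset.sum_range_succ' (fun k => hkA a b d k * hkB c b d (n + 1 - k)) (n + 1),
    Finset.sum_range_succ' (fun k => hkA (a - d) b d k * hkB c b d (n + 1 - k)) (n + 1)]
  have key : ∀ k ∈ Finset.range (n + 1),
      hkA a b d (k + 1) * hkB c b d (n + 1 - (k + 1))
        = hkA (a - d) b d (k + 1) * hkB c b d (n + 1 - (k + 1))
          + d * (hkA (a + b - d) b d k * hkB c b d (n - k)) := by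
    intro k _
    have e : n + 1 - (k + 1) = n - k := by omega
    rw [e, hkA_pascal]
    ring
  rw [Finset.sum_congr rfl key, Finset.sum_add_distrib, ← Finset.mul_sum]
  simp only [hkA_zero]
  ring

lemma hkS_zero_left (b c d : ℚ) (n : ℕ) : hkS 0 b c d n = hkB c b d n := by
  unfold hkS
  rw [Finset.sum_range_succ' (fun k => hkA 0 b d k * hkB c b d (n - k)) n]
  simp [hkA_zero_left, hkA_zero]

open Polynomial in
/-- polynomial (in `a`) version of `hkP (a + c) d k` -/
noncomputable def paP (c d : ℚ) (k : ℕ) : Polynomial ℚ :=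
  ∏ j ∈ Finset.range k, (X + C (c - d * j))

open Polynomial in
noncomputable def paA (b d : ℚ) : ℕ → Polynomial ℚ
  | 0 => 1
  | k + 1 => C (((k + 1).factorial : ℚ)⁻¹) * (X * paP (b * (k + 1) - d) d k)

open Polynomial in
noncomputable def paS (b c d : ℚ) (n : ℕ) : Polynomial ℚ :=
  ∑ k ∈ Finset.range (n + 1), paA b d k * C (hkB c b d (n - k))

open Polynomial in
noncomputable def paR (b c d : ℚ) (n : ℕ) : Polynomial ℚ :=
  C ((n.factorial : ℚ)⁻¹) * paP (c + b * n) d n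

open Polynomial in
lemma paP_eval (c d : ℚ) (k : ℕ) (a : ℚ) : (paP c d k).eval a = hkP (a + c) d k := by
  simp only [paP, hkP, eval_prod, eval_add, eval_X, eval_C]
  exact Finset.prod_congr rfl fun j _ => by ring

open Polynomial in
lemma paA_eval (b d : ℚ) (k : ℕ) (a : ℚ) : (paA b d k).eval a = hkA a b d k := by
  cases k with
  | zero => simp [paA, hkA]
  | succ k =>
    simp only [paA, hkA, eval_mul, eval_C, eval_X, paP_eval]
    rw [show a + (b * ((k : ℚ) + 1) - d) = a + b * (k + 1) - d from by push_cast; ring]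
    push_cast
    rw [div_eq_mul_inv]
    ring

open Polynomial in
lemma paS_eval (b c d : ℚ) (n : ℕ) (a : ℚ) : (paS b c d n).eval a = hkS a b c d n := by
  simp only [paS, hkS, eval_finset_sum, eval_mul, eval_C, paA_eval]

open Polynomial in
lemma paR_eval (b c d : ℚ) (n : ℕ) (a : ℚ) : (paR b c d n).eval a = hkB (a + c) b d n := by
  simp only [paR, eval_mul, eval_C, paP_eval, hkB]
  rw [show a + (c + b * (n : ℚ)) = a + c + b * n from by ring, div_eq_mul_inv]
  ring

open Polynomial in
lemma eval_eq_zero_of_step (p : Polynomial ℚ) (d : ℚ) (hd : d ≠ 0)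
    (h : ∀ a, p.eval a = p.eval (a - d)) (h0 : p.eval 0 = 0) : ∀ a, p.eval a = 0 := by
  have key : ∀ k : ℕ, p.eval (k * d) = 0 := by
    intro k
    induction k with
    | zero => simpa using h0
    | succ k ih =>
      have := h ((k + 1 : ℕ) * d)
      rw [show ((k + 1 : ℕ) : ℚ) * d - d = (k : ℚ) * d from by push_cast; ring] at this
      rw [this, ih]
  have hp : p = 0 := by
    apply Polynomial.eq_zero_of_infinite_isRoot
    apply Set.infinite_of_injective_forall_mem (f := fun k : ℕ => (k : ℚ) * d)
    · intro x y hxy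
      have : (x : ℚ) = y := by
        exact mul_right_cancel₀ hd hxy
      exact_mod_cast this
    · intro k
      exact key k
  intro a
  rw [hp]
  simp

theorem rothe1 : ∀ (n : ℕ) (a b c d : ℚ), d ≠ 0 → hkS a b c d n = hkB (a + c) b d n := by
  intro n
  induction n with
  | zero => intro a b c d _; simp [hkS, hkA_zero, hkB_zero]
  | succ n ih =>
    intro a b c d hd
    set p := paS b c d (n + 1) - paR b c d (n + 1) with hp
    have hstep : ∀ a, p.eval a = p.eval (a - d) := by
      intro a
      have hS := hkS_step a b c d n
      have hR := hkB_pascal (a + c) b d n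
      rw [show a + c - d = a - d + c from by ring,
        show a + c + b - d = a + b - d + c from by ring] at hR
      have hIH := ih (a + b - d) b c d hd
      simp only [hp, Polynomial.eval_sub, paS_eval, paR_eval]
      rw [hS, hIH, hR]
      ring
    have h0 : p.eval 0 = 0 := by
      simp only [hp, Polynomial.eval_sub, paS_eval, paR_eval, hkS_zero_left, zero_add, sub_self]
    have hz := eval_eq_zero_of_step p d hd hstep h0 a
    simp only [hp, Polynomial.eval_sub, paS_eval, paR_eval] at hz
    linarith

open Polynomial in
/-- polynomial (in `d`) version of `hkP x d k` -/
noncomputable def pdP (x : ℚ) (k : ℕ) : Polynomial ℚ :=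
  ∏ j ∈ Finset.range k, (C x - C (j : ℚ) * X)

open Polynomial in
noncomputable def pdA (a b : ℚ) : ℕ → Polynomial ℚ
  | 0 => 1
  | k + 1 => C (a * (((k + 1).factorial : ℚ))⁻¹) *
      ∏ j ∈ Finset.range k, (C (a + b * (k + 1)) - C ((j : ℚ) + 1) * X)

open Polynomial in
noncomputable def pdB (a b : ℚ) (k : ℕ) : Polynomial ℚ :=
  C ((k.factorial : ℚ)⁻¹) * pdP (a + b * k) k

open Polynomial in
lemma pdP_eval (x : ℚ) (k : ℕ) (d : ℚ) : (pdP x k).eval d = hkP x d k := by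
  simp only [pdP, hkP, eval_prod, eval_sub, eval_mul, eval_C, eval_X]
  exact Finset.prod_congr rfl fun j _ => by ring

open Polynomial in
lemma pdA_eval (a b : ℚ) (k : ℕ) (d : ℚ) : (pdA a b k).eval d = hkA a b d k := by
  cases k with
  | zero => simp [pdA, hkA]
  | succ k =>
    simp only [pdA, hkA, eval_mul, eval_C, eval_prod, eval_sub, eval_X, hkP, div_eq_mul_inv]
    push_cast
    have hprod : ∏ x ∈ Finset.range k, (a + b * ((k:ℚ)+1) - ((x:ℚ)+1) * d)
        = ∏ j ∈ Finset.range k, (a + b * ((k:ℚ)+1) - d - d * (j:ℚ)) :=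
      Finset.prod_congr rfl fun j _ => by ring
    rw [hprod]
    ring

open Polynomial in
lemma pdB_eval (a b : ℚ) (k : ℕ) (d : ℚ) : (pdB a b k).eval d = hkB a b d k := by
  simp only [pdB, eval_mul, eval_C, pdP_eval, hkB, div_eq_mul_inv]
  ring

theorem rothe1' (n : ℕ) (a b c d : ℚ) : hkS a b c d n = hkB (a + c) b d n := by
  rcases eq_or_ne d 0 with rfl | hd
  · set p := (∑ k ∈ Finset.range (n + 1), pdA a b k * pdB c b (n - k)) - pdB (a + c) b n with hp
    have hroot : ∀ x : ℚ, x ≠ 0 → p.eval x = 0 := by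
      intro x hx
      have := rothe1 n a b c x hx
      simp only [hp, Polynomial.eval_sub, Polynomial.eval_finset_sum, Polynomial.eval_mul,
        pdA_eval, pdB_eval]
      rw [← hkS]
      rw [this]
      ring
    have hpz : p = 0 := by
      apply Polynomial.eq_zero_of_infinite_isRoot
      apply Set.infinite_of_injective_forall_mem (f := fun k : ℕ => ((k : ℚ) + 1))
      · intro x y hxy
        simpa using hxy
      · intro k
        apply hroot
        positivity
    have := congrArg (Polynomial.eval 0) hpz
    simp only [hp, Polynomial.eval_sub, Polynomial.eval_finset_sum, Polynomial.eval_mul,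
      pdA_eval, pdB_eval, Polynomial.eval_zero] at this
    rw [← hkS] at this
    linarith
  · exact rothe1 n a b c d hd

/-- Hagen–Rothe convolution. -/
theorem rothe2 (n : ℕ) (a b c d : ℚ) :
    ∑ k ∈ Finset.range (n + 1), hkA a b d k * hkA c b d (n - k) = hkA (a + c) b d n := by
  cases n with
  | zero => simp [hkA_zero]
  | succ n =>
    have h1 := rothe1' (n + 1) a b c d
    have h2 := rothe1' n a b (c + b - d) d
    rw [hkS] at h1 h2
    rw [show a + (c + b - d) = a + c + b - d from by ring] at h2
    rw [Finset.sum_range_succ] at h1 ⊢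
    have key : ∀ k ∈ Finset.range (n + 1),
        hkA a b d k * hkA c b d (n + 1 - k)
          = hkA a b d k * hkB c b d (n + 1 - k)
            - b * (hkA a b d k * hkB (c + b - d) b d (n - k)) := by
      intro k hk
      have hkn : k ≤ n := by simpa [Nat.lt_succ_iff] using hk
      have e : n + 1 - k = (n - k) + 1 := by omega
      rw [e, hkA_eq]
      ring
    rw [Finset.sum_congr rfl key, Finset.sum_sub_distrib, ← Finset.mul_sum]
    rw [show n + 1 - (n + 1) = 0 from by omega] at h1 ⊢
    rw [hkA_eq (a + c) b d n]
    simp only [hkA_zero, hkB_zero] at h1 ⊢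
    linear_combination h1 - b * h2

noncomputable def Sq (q : ℚ) (n : ℕ) : ℚ :=
  ∑ T ∈ Tree.treesOfNumNodesEq n, hookProd (fun h => q + (2 - q) / (h : ℚ)) T

lemma Sq_zero (q : ℚ) : Sq q 0 = 1 := by
  simp [Sq, BinaryTree.treesOfNumNodesEq_zero, hookProd]

lemma Sq_succ (q : ℚ) (n : ℕ) :
    Sq q (n + 1) = (q + (2 - q) / ((n : ℚ) + 1)) *
      ∑ ij ∈ Finset.HasAntidiagonal.antidiagonal n, Sq q ij.1 * Sq q ij.2 := by
  classical
  unfold Sq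
  rw [Tree.treesOfNumNodesEq, BinaryTree.treesOfNumNodesEq_succ]
  rw [Finset.sum_biUnion]
  · rw [Finset.mul_sum]
    apply Finset.sum_congr rfl
    rintro ⟨i, j⟩ hij
    have hij' : i + j = n := Finset.HasAntidiagonal.mem_antidiagonal.mp hij
    rw [Finset.sum_map, Finset.sum_product]
    have : ∀ l ∈ Tree.treesOfNumNodesEq i, ∀ r ∈ Tree.treesOfNumNodesEq j,
        hookProd (fun h => q + (2 - q) / (h : ℚ)) (BinaryTree.node () l r)
          = (q + (2 - q) / ((n : ℚ) + 1)) *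
            (hookProd (fun h => q + (2 - q) / (h : ℚ)) l *
             hookProd (fun h => q + (2 - q) / (h : ℚ)) r) := by
      intro l hl r hr
      have hl' : BinaryTree.numNodes l = i := BinaryTree.mem_treesOfNumNodesEq.mp hl
      have hr' : BinaryTree.numNodes r = j := BinaryTree.mem_treesOfNumNodesEq.mp hr
      simp only [hookProd]
      rw [hl', hr', hij']
      push_cast
      ring
    calc ∑ l ∈ Tree.treesOfNumNodesEq i, ∑ r ∈ Tree.treesOfNumNodesEq j,
            hookProd (fun h => q + (2 - q) / (h : ℚ)) ((Function.Embedding.mk _ _) (l, r))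
        = ∑ l ∈ Tree.treesOfNumNodesEq i, ∑ r ∈ Tree.treesOfNumNodesEq j,
            (q + (2 - q) / ((n : ℚ) + 1)) *
            (hookProd (fun h => q + (2 - q) / (h : ℚ)) l *
             hookProd (fun h => q + (2 - q) / (h : ℚ)) r) := by
          apply Finset.sum_congr rfl; intro l hl
          apply Finset.sum_congr rfl; intro r hr
          exact this l hl r hr
      _ = (q + (2 - q) / ((n : ℚ) + 1)) *
            ((∑ T ∈ Tree.treesOfNumNodesEq i, hookProd (fun h => q + (2 - q) / (h : ℚ)) T) *
             (∑ T ∈ Tree.treesOfNumNodesEq j, hookProd (fun h => q + (2 - q) / (h : ℚ)) T)) := by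
          rw [Finset.sum_mul_sum, Finset.mul_sum]
          exact Finset.sum_congr rfl fun l _ => by rw [Finset.mul_sum]
  · -- disjointness
    rintro ⟨i, j⟩ _ ⟨i', j'⟩ _ h
    simp only [Function.onFun]
    rw [Finset.disjoint_left]
    intro a ha ha'
    apply h
    simp only [Finset.mem_map, Finset.mem_product, Function.Embedding.coeFn_mk, Prod.exists] at ha ha'
    obtain ⟨l, r, ⟨hl, hr⟩, rfl⟩ := ha
    obtain ⟨l', r', ⟨hl', hr'⟩, heq⟩ := ha'
    cases heq
    have h1 := BinaryTree.mem_treesOfNumNodesEq.mp hl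
    have h2 := BinaryTree.mem_treesOfNumNodesEq.mp hr
    have h3 := BinaryTree.mem_treesOfNumNodesEq.mp hl'
    have h4 := BinaryTree.mem_treesOfNumNodesEq.mp hr'
    simp_all

lemma step_arith (q : ℚ) (n : ℕ) :
    (q + (2 - q) / ((n : ℚ) + 1)) * (2 ^ n * hkA 2 q (q - 1) n)
      = 2 ^ (n + 1) * hkA 1 q (q - 1) (n + 1) := by
  cases n with
  | zero =>
    simp [hkA, hkP_zero]
  | succ m =>
    rw [hkA, hkA]
    have e1 : hkP (1 + q * ((m : ℚ) + 1 + 1) - (q - 1)) (q - 1) (m + 1)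
        = (q * ((m : ℚ) + 1) + 2) * hkP (2 + q * ((m : ℚ) + 1) - (q - 1)) (q - 1) m := by
      rw [show (1 + q * ((m : ℚ) + 1 + 1) - (q - 1)) = q * ((m:ℚ)+1) + 2 from by ring]
      rw [hkP_succ]
      rw [show q * ((m:ℚ)+1) + 2 - (q - 1) = 2 + q * ((m:ℚ)+1) - (q - 1) from by ring]
    push_cast
    rw [e1]
    have h1 := fact_ne (m + 1)
    have h2 := fact_ne (m + 2)
    have h3 : ((m : ℚ) + 1 + 1) ≠ 0 := by positivity
    have h4 : ((m + 1 + 1).factorial : ℚ) = ((m : ℚ) + 1 + 1) * ((m + 1).factorial : ℚ) := by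
      rw [Nat.factorial_succ]; push_cast; ring
    rw [h4]
    field_simp
    ring

lemma Sq_eq (q : ℚ) : ∀ n : ℕ, Sq q n = 2 ^ n * hkA 1 q (q - 1) n := by
  intro n
  induction n using Nat.strong_induction_on with
  | _ n ih =>
    cases n with
    | zero => simp [Sq_zero, hkA_zero]
    | succ n =>
      rw [Sq_succ]
      have key : ∀ ij ∈ Finset.HasAntidiagonal.antidiagonal n, Sq q ij.1 * Sq q ij.2
          = 2 ^ n * (hkA 1 q (q - 1) ij.1 * hkA 1 q (q - 1) ij.2) := by
        rintro ⟨i, j⟩ hij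
        have hij' : i + j = n := Finset.HasAntidiagonal.mem_antidiagonal.mp hij
        rw [ih i (by omega), ih j (by omega)]
        rw [show (2 : ℚ) ^ i * hkA 1 q (q-1) i * (2 ^ j * hkA 1 q (q-1) j)
          = 2 ^ (i + j) * (hkA 1 q (q-1) i * hkA 1 q (q-1) j) from by rw [pow_add]; ring, hij']
      rw [Finset.sum_congr rfl key, ← Finset.mul_sum,
        Finset.Nat.sum_antidiagonal_eq_sum_range_succ_mk]
      have := rothe2 n 1 q 1 (q - 1)
      norm_num at this
      rw [this, step_arith]

theorem stmt6_aux (n : ℕ) (hn : 1 ≤ n) (q : ℚ) :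
    ∏ i ∈ Finset.Icc 1 (n - 1), ((i : ℚ) + 1 + q * ((n : ℚ) - (i : ℚ)))
      = (n.factorial : ℚ) / 2 ^ n *
          ∑ T ∈ Tree.treesOfNumNodesEq n, hookProd (fun h => q + (2 - q) / (h : ℚ)) T := by
  obtain ⟨m, rfl⟩ : ∃ m, n = m + 1 := ⟨n - 1, by omega⟩
  rw [show (∑ T ∈ Tree.treesOfNumNodesEq (m+1), hookProd (fun h => q + (2 - q) / (h : ℚ)) T)
      = Sq q (m+1) from rfl, Sq_eq]
  rw [hkA]
  have hfact := fact_ne (m + 1)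
  have hpow : ((2 : ℚ) ^ (m + 1)) ≠ 0 := by positivity
  rw [show m + 1 - 1 = m from rfl]
  have hprod : ∏ i ∈ Finset.Icc 1 m, ((i : ℚ) + 1 + q * (((m : ℚ) + 1) - (i : ℚ)))
      = hkP (1 + q * ((m : ℚ) + 1) - (q - 1)) (q - 1) m := by
    rw [hkP, show Finset.Icc 1 m = Finset.Ico 1 (m + 1) from by rw [Finset.Ico_add_one_right_eq_Icc],
      Finset.prod_Ico_eq_prod_range]
    apply Finset.prod_congr (by norm_num)
    intro j _
    push_cast
    ring
  push_cast
  rw [hprod]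
  field_simp

/-- `∏_{i=1}^{n-1} (i + 1 + q(n - i)) = (n!/2^n) · Σ_{T ∈ 𝒯_n} ∏_{v ∈ T} (q + (2-q)/h_v)`,
the sum being over all plane binary trees with `n` vertices. -/
theorem stmt6 (n : ℕ) (hn : 1 ≤ n) (q : ℚ) :
    ∏ i ∈ Finset.Icc 1 (n - 1), ((i : ℚ) + 1 + q * ((n : ℚ) - (i : ℚ)))
      = (n.factorial : ℚ) / 2 ^ n *
          ∑ T ∈ Tree.treesOfNumNodesEq n, hookProd (fun h => q + (2 - q) / (h : ℚ)) T :=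
  stmt6_aux n hn q
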